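/- Let α > 0 be a real number and j ∈ ℤ. Define φ̂ : ℝ → ℂ by φ̂(ω) = (1 − e^{2^j(α − iω)}) / (iω − α). Then there exist constants 0 < A ≤ B < ∞ such that for every ω ∈ ℝ, A ≤ ∑_{k∈ℤ} |φ̂(ω − 2π·2^{−j} k)|² ≤ B. -/

import Mathlib

open Real

lemma aux_norm_bounds (α : ℝ) (hα : 0 < α) (j : ℤ) (ω' : ℝ) :
    (Real.exp ((2:ℝ)^j*α) - 1)^2 / (ω'^2 + α^2)
      ≤ ‖(1 - Complex.exp ((2:ℂ)^j * ((α:ℂ) - Complex.I * (ω':ℂ)))) /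
          (Complex.I * (ω':ℂ) - (α:ℂ))‖^2
    ∧ ‖(1 - Complex.exp ((2:ℂ)^j * ((α:ℂ) - Complex.I * (ω':ℂ)))) /
          (Complex.I * (ω':ℂ) - (α:ℂ))‖^2
      ≤ (1 + Real.exp ((2:ℝ)^j*α))^2 / (ω'^2 + α^2) := by
  have h2 : (0:ℝ) < (2:ℝ)^j := zpow_pos (by norm_num) j
  set E : ℝ := Real.exp ((2:ℝ)^j*α) with hEdef
  have hE1 : 1 < E := Real.one_lt_exp_iff.mpr (mul_pos h2 hα)
  set z : ℂ := (2:ℂ)^j * ((α:ℂ) - Complex.I * (ω':ℂ)) with hzdef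
  have hz : z = (((2:ℝ)^j*α : ℝ):ℂ) + Complex.I * ((-((2:ℝ)^j*ω') : ℝ):ℂ) := by
    rw [hzdef]; push_cast; ring
  have hze : ‖Complex.exp z‖ = E := by
    rw [hz, Complex.norm_exp]
    simp only [Complex.add_re, Complex.ofReal_re, Complex.mul_re, Complex.I_re,
      Complex.I_im, Complex.ofReal_im]
    ring_nf
    exact hEdef.symm
  have hlow : E - 1 ≤ ‖1 - Complex.exp z‖ := by
    calc E - 1 = ‖Complex.exp z‖ - ‖(1:ℂ)‖ := by rw [hze]; simp
      _ ≤ ‖Complex.exp z - 1‖ := norm_sub_norm_le _ _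
      _ = ‖1 - Complex.exp z‖ := norm_sub_rev _ _
  have hhigh : ‖1 - Complex.exp z‖ ≤ 1 + E := by
    calc ‖1 - Complex.exp z‖ ≤ ‖(1:ℂ)‖ + ‖Complex.exp z‖ := norm_sub_le _ _
      _ = 1 + E := by rw [hze]; simp
  have hden : ‖Complex.I * (ω':ℂ) - (α:ℂ)‖^2 = ω'^2 + α^2 := by
    rw [Complex.sq_norm, Complex.normSq_apply]
    simp
    ring
  have hdpos : (0:ℝ) < ω'^2 + α^2 := by positivity
  rw [norm_div, div_pow, hden]
  constructor
  · gcongr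
  · gcongr

set_option maxHeartbeats 1600000 in
/-- Let `α > 0` and `j ∈ ℤ`, and let
`φ̂(ω) = (1 − exp(2^j(α − iω)))/(iω − α)` be the Fourier transform of the exponential
B-spline. Then there are constants `0 < A ≤ B < ∞` such that for every `ω ∈ ℝ`,
`A ≤ ∑_{k∈ℤ} |φ̂(ω − 2π·2^{−j}k)|² ≤ B`. -/
theorem stmt_7 (α : ℝ) (hα : 0 < α) (j : ℤ)
    (φhat : ℝ → ℂ)
    (hφ : ∀ ω : ℝ, φhat ω =
      (1 - Complex.exp ((2 : ℂ) ^ j * ((α : ℂ) - Complex.I * (ω : ℂ)))) /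
        (Complex.I * (ω : ℂ) - (α : ℂ))) :
    ∃ A B : ℝ, 0 < A ∧ A ≤ B ∧
      ∀ ω : ℝ,
        A ≤ ∑' k : ℤ, ‖φhat (ω - 2 * π * (2 : ℝ) ^ (-j) * (k : ℝ))‖ ^ 2 ∧
        ∑' k : ℤ, ‖φhat (ω - 2 * π * (2 : ℝ) ^ (-j) * (k : ℝ))‖ ^ 2 ≤ B := by
  have h2 : (0:ℝ) < (2:ℝ)^j := zpow_pos (by norm_num) j
  set c : ℝ := 2 * π * (2:ℝ)^(-j) with hcdef
  have hcpos : 0 < c := by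
    have := Real.pi_pos
    have : (0:ℝ) < (2:ℝ)^(-j) := zpow_pos (by norm_num) _
    positivity
  set E : ℝ := Real.exp ((2:ℝ)^j*α) with hEdef
  have hE1 : 1 < E := Real.one_lt_exp_iff.mpr (mul_pos h2 hα)
  have hTsum : Summable (fun m : ℤ => 1/(m:ℝ)^2) :=
    Real.summable_one_div_int_pow.mpr one_lt_two
  set T : ℝ := ∑' m : ℤ, 1/(m:ℝ)^2 with hTdef
  set A : ℝ := (E-1)^2/(c^2/4+α^2) with hAdef
  set B : ℝ := (1+E)^2/α^2 + (1+E)^2*4/c^2*T with hBdef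
  have hApos : 0 < A := by
    apply div_pos (pow_pos (by linarith) 2) (by positivity)
  have main : ∀ ω : ℝ,
      A ≤ (∑' k : ℤ, ‖φhat (ω - c * (k:ℝ))‖ ^ 2) ∧
      (∑' k : ℤ, ‖φhat (ω - c * (k:ℝ))‖ ^ 2) ≤ B := by
    intro ω
    set f : ℤ → ℝ := fun k => ‖φhat (ω - c * (k:ℝ))‖^2 with hfdef
    have hfnonneg : ∀ k, 0 ≤ f k := fun k => by positivity
    set k₀ : ℤ := round (ω / c) with hk0
    have hδ : |ω - c * (k₀:ℝ)| ≤ c/2 := by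
      have h1 : |ω/c - (k₀:ℝ)| ≤ 1/2 := abs_sub_round (ω/c)
      have h2' : ω - c*(k₀:ℝ) = c * (ω/c - (k₀:ℝ)) := by field_simp
      rw [h2', abs_mul, abs_of_pos hcpos]
      nlinarith [abs_nonneg (ω/c - (k₀:ℝ))]
    -- pointwise upper bounds on f
    have hup : ∀ k : ℤ, f k ≤ (1+E)^2 / ((ω - c*(k:ℝ))^2 + α^2) := by
      intro k
      have := (aux_norm_bounds α hα j (ω - c*(k:ℝ))).2
      rw [← hφ] at this
      exact this
    have hlo : ∀ k : ℤ, (E-1)^2 / ((ω - c*(k:ℝ))^2 + α^2) ≤ f k := by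
      intro k
      have := (aux_norm_bounds α hα j (ω - c*(k:ℝ))).1
      rw [← hφ] at this
      exact this
    set g : ℤ → ℝ := fun m =>
      (if m = 0 then (1+E)^2/α^2 else 0) + (1+E)^2*4/c^2 * (1/(m:ℝ)^2) with hgdef
    have hfg : ∀ m : ℤ, f (k₀ + m) ≤ g m := by
      intro m
      have hub := hup (k₀ + m)
      push_cast at hub
      rcases eq_or_ne m 0 with hm | hm
      · subst hm
        have hg0 : g 0 = (1+E)^2/α^2 := by simp [hgdef]
        rw [hg0]
        refine hub.trans ?_
        push_cast
        gcongr
        nlinarith [sq_nonneg (ω - c*(k₀:ℝ))]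
      · have hm' : ((m:ℝ)) ≠ 0 := Int.cast_ne_zero.mpr hm
        have hM : (1:ℝ) ≤ |(m:ℝ)| := by
          rw [← Int.cast_abs]
          exact_mod_cast Int.one_le_abs hm
        have hpos2 : 0 ≤ c*|(m:ℝ)| - c/2 := by nlinarith
        have habs : c*|(m:ℝ)| - c/2 ≤ |ω - c*((k₀:ℝ)+(m:ℝ))| := by
          have h3 : |c*(m:ℝ)| - |ω - c*(k₀:ℝ)| ≤ |c*(m:ℝ) - (ω - c*(k₀:ℝ))| :=
            abs_sub_abs_le_abs_sub _ _
          have h4 : |c*(m:ℝ) - (ω - c*(k₀:ℝ))| = |ω - c*((k₀:ℝ)+(m:ℝ))| := by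
            rw [← abs_neg]; ring_nf
          rw [abs_mul, abs_of_pos hcpos, h4] at h3
          linarith [hδ]
        have h5 : (c*|(m:ℝ)| - c/2)^2 ≤ |ω - c*((k₀:ℝ)+(m:ℝ))|^2 :=
          pow_le_pow_left₀ hpos2 habs 2
        have h6 : c^2*(m:ℝ)^2/4 ≤ (c*|(m:ℝ)| - c/2)^2 := by
          nlinarith [sq_abs (m:ℝ), mul_nonneg (sq_nonneg c) (sq_nonneg (|(m:ℝ)|-1)),
            mul_nonneg (mul_nonneg hcpos.le hcpos.le) (sub_nonneg.mpr hM)]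
        have hsq : c^2*(m:ℝ)^2/4 ≤ (ω - c*((k₀:ℝ)+(m:ℝ)))^2 := by
          calc c^2*(m:ℝ)^2/4 ≤ (c*|(m:ℝ)| - c/2)^2 := h6
            _ ≤ |ω - c*((k₀:ℝ)+(m:ℝ))|^2 := h5
            _ = (ω - c*((k₀:ℝ)+(m:ℝ)))^2 := sq_abs _
        have hpos3 : 0 < c^2*(m:ℝ)^2/4 := by positivity
        have hdiv : (1+E)^2 / ((ω - c*((k₀:ℝ)+(m:ℝ)))^2 + α^2)
            ≤ (1+E)^2 / (c^2*(m:ℝ)^2/4) :=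
          div_le_div_of_nonneg_left (by positivity) hpos3 (by nlinarith [sq_nonneg α])
        have heq : (1+E)^2 / (c^2*(m:ℝ)^2/4) = (1+E)^2*4/c^2 * (1/(m:ℝ)^2) := by
          field_simp
        have hg : g m = (1+E)^2*4/c^2 * (1/(m:ℝ)^2) := by simp [hgdef, hm]
        rw [hg, ← heq]
        exact hub.trans hdiv
    have hg1sum : Summable (fun m : ℤ => (if m = 0 then (1+E)^2/α^2 else 0)) := by
      apply summable_of_ne_finset_zero (s := ({0} : Finset ℤ))
      intro m hm
      simp only [Finset.mem_singleton] at hm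
      simp [hm]
    have hg2sum : Summable (fun m : ℤ => (1+E)^2*4/c^2 * (1/(m:ℝ)^2)) :=
      hTsum.mul_left _
    have hgsum : Summable g := hg1sum.add hg2sum
    have hshift : Summable (fun m => f (k₀ + m)) :=
      Summable.of_nonneg_of_le (fun m => hfnonneg _) hfg hgsum
    have hfsum : Summable f := by
      have := (Equiv.addLeft k₀).summable_iff (f := f)
      exact this.mp hshift
    constructor
    · -- lower bound
      have h1 : A ≤ f k₀ := by
        refine le_trans ?_ (hlo k₀)
        rw [hAdef]
        gcongr
        nlinarith [hδ, abs_nonneg (ω - c*(k₀:ℝ)), sq_abs (ω - c*(k₀:ℝ))]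
      exact h1.trans (Summable.le_tsum hfsum k₀ (fun k _ => hfnonneg k))
    · -- upper bound
      have h1 : ∑' k, f k = ∑' m, f (k₀ + m) :=
        ((Equiv.addLeft k₀).tsum_eq f).symm
      rw [h1]
      have h2' : ∑' m, f (k₀ + m) ≤ ∑' m, g m := Summable.tsum_le_tsum hfg hshift hgsum
      have h3 : ∑' m, g m = B := by
        rw [hgdef, Summable.tsum_add hg1sum hg2sum, tsum_ite_eq, tsum_mul_left, hBdef, hTdef]
      rw [← h3]
      exact h2'
  exact ⟨A, B, hApos, (main 0).1.trans (main 0).2, main⟩
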